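/- Let R be a ring and let G be a Gorenstein projective object of the category Ch(R) of chain complexes of (left) R-modules. Then for every integer n, the R-module G_n is Gorenstein projective. -/

import Mathlib

open CategoryTheory CategoryTheory.Limits

universe w v u

variable {A : Type u} [Category.{v} A] [Abelian A]

/-- `IsShortExact i p` asserts that `0 → X → Y → Z → 0` is a short exact sequence. -/
def IsShortExact {X Y Z : A} (i : X ⟶ Y) (p : Y ⟶ Z) : Prop :=
  ∃ w : i ≫ p = 0, (ShortComplex.mk i p w).ShortExact

section Ext

variable [HasExt.{w} A]

/-- `Ext¹(X, Y) = 0`. -/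
def Ext1Zero (X Y : A) : Prop := Subsingleton (Abelian.Ext X Y 1)

/-- `(F, C)` is a cotorsion pair: each class is the `Ext¹`-orthogonal of the other. -/
def IsCotorsionPair (F C : Set A) : Prop :=
  (∀ X : A, X ∈ F ↔ ∀ Y ∈ C, Ext1Zero.{w} X Y) ∧
  (∀ Y : A, Y ∈ C ↔ ∀ X ∈ F, Ext1Zero.{w} X Y)

/-- A complete cotorsion pair: for every object `X` there are short exact sequences
`0 → C → F → X → 0` and `0 → X → C' → F' → 0` with `F, F'` in the left class and
`C, C'` in the right class. -/
def IsCompleteCotorsionPair (F C : Set A) : Prop :=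
  IsCotorsionPair.{w} F C ∧
  (∀ X : A, ∃ (Co Fo : A) (i : Co ⟶ Fo) (p : Fo ⟶ X),
    Co ∈ C ∧ Fo ∈ F ∧ IsShortExact i p) ∧
  (∀ X : A, ∃ (Co Fo : A) (i : X ⟶ Co) (p : Co ⟶ Fo),
    Co ∈ C ∧ Fo ∈ F ∧ IsShortExact i p)

end Ext

/-- A thick class: closed under direct summands (retracts) and satisfying two-out-of-three
for short exact sequences. -/
def IsThickClass (W : Set A) : Prop :=
  (∀ (X Y : A) (s : Y ⟶ X) (r : X ⟶ Y), s ≫ r = 𝟙 Y → X ∈ W → Y ∈ W) ∧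
  (∀ ⦃X Y Z : A⦄ (i : X ⟶ Y) (p : Y ⟶ Z), IsShortExact i p →
    (X ∈ W → Y ∈ W → Z ∈ W) ∧ (X ∈ W → Z ∈ W → Y ∈ W) ∧ (Y ∈ W → Z ∈ W → X ∈ W))

/-- The class `F` is closed under kernels of epimorphisms between objects of `F`. -/
def ClosedUnderKernelsOfEpis (F : Set A) : Prop :=
  ∀ ⦃X Y Z : A⦄ (i : X ⟶ Y) (p : Y ⟶ Z), IsShortExact i p → Y ∈ F → Z ∈ F → X ∈ F

/-- The class `C` is closed under cokernels of monomorphisms between objects of `C`. -/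
def ClosedUnderCokernelsOfMonos (C : Set A) : Prop :=
  ∀ ⦃X Y Z : A⦄ (i : X ⟶ Y) (p : Y ⟶ Z), IsShortExact i p → X ∈ C → Y ∈ C → Z ∈ C

/-- An injective cotorsion pair: a complete cotorsion pair `(W, F)` with `W` thick and
`W ∩ F` equal to the class of injective objects. -/
def IsInjectiveCotorsionPair [HasExt.{w} A] (W F : Set A) : Prop :=
  IsCompleteCotorsionPair.{w} W F ∧ IsThickClass W ∧
  ∀ X : A, (X ∈ W ∧ X ∈ F) ↔ Injective X

/-- A projective cotorsion pair: a complete cotorsion pair `(C, W)` with `W` thick and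
`C ∩ W` equal to the class of projective objects. -/
def IsProjectiveCotorsionPair [HasExt.{w} A] (C W : Set A) : Prop :=
  IsCompleteCotorsionPair.{w} C W ∧ IsThickClass W ∧
  ∀ X : A, (X ∈ C ∧ X ∈ W) ↔ Projective X

/-- A Hovey triple `(Q, W, R)`: `W` is thick and both `(Q, W ∩ R)` and `(Q ∩ W, R)` are
complete cotorsion pairs. -/
def IsHoveyTriple [HasExt.{w} A] (Q W R : Set A) : Prop :=
  IsThickClass W ∧ IsCompleteCotorsionPair.{w} Q (W ∩ R) ∧
    IsCompleteCotorsionPair.{w} (Q ∩ W) R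

/-- `M` is Gorenstein projective: `M = Z₀ Q` for some exact complex `Q` of projectives which
remains exact after applying `Hom(-, P)` for every projective object `P`. -/
def IsGorensteinProjective (M : A) : Prop :=
  ∃ Q : ChainComplex A ℤ,
    (∀ n : ℤ, Projective (Q.X n)) ∧
    (∀ n : ℤ, (ShortComplex.mk (Q.d (n + 1) n) (Q.d n (n - 1)) (Q.d_comp_d _ _ _)).Exact) ∧
    (∃ (ι : M ⟶ Q.X 0) (w : ι ≫ Q.d 0 (-1) = 0),
      Mono ι ∧ (ShortComplex.mk ι (Q.d 0 (-1)) w).Exact) ∧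
    (∀ (P : A), Projective P → ∀ (n : ℤ) (f : Q.X n ⟶ P), Q.d (n + 1) n ≫ f = 0 →
      ∃ g : Q.X (n - 1) ⟶ P, Q.d n (n - 1) ≫ g = f)

namespace GPAux

open HomologicalComplex


variable {R : Type u} [Ring R]

/-- The disk complex with `P` in degrees `n+1` and `n`, identity differential. -/
noncomputable def disk (P : ModuleCat.{u} R) (n : ℤ) : ChainComplex (ModuleCat.{u} R) ℤ where
  X k := if k = n + 1 ∨ k = n then P else ModuleCat.of R PUnit
  d i j :=
    if h : i = n + 1 ∧ j = n then
      eqToHom (if_pos (Or.inl h.1)) ≫ eqToHom (if_pos (Or.inr h.2)).symm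
    else 0
  shape i j hij := by
    beta_reduce
    rw [dif_neg]
    rintro ⟨rfl, rfl⟩
    exact hij rfl
  d_comp_d' i j k _ _ := by
    beta_reduce
    by_cases h : i = n + 1 ∧ j = n
    · obtain ⟨rfl, hj⟩ := h
      rw [dif_neg (show ¬(j = n + 1 ∧ k = n) by rintro ⟨h1, -⟩; omega)]
      simp
    · rw [dif_neg h]
      simp

lemma disk_isZero (P : ModuleCat.{u} R) (n k : ℤ) (h : ¬ (k = n + 1 ∨ k = n)) :
    IsZero ((disk P n).X k) := by
  dsimp [disk]
  rw [if_neg h]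
  exact ModuleCat.isZero_of_subsingleton _


/-- Chain map out of the disk determined by `σ : P ⟶ E.X (n+1)`. -/
noncomputable def diskTo (P : ModuleCat.{u} R) (n : ℤ) {E : ChainComplex (ModuleCat.{u} R) ℤ}
    (σ : P ⟶ E.X (n + 1)) : disk P n ⟶ E where
  f k :=
    if h : k = n + 1 then
      eqToHom (if_pos (Or.inl h)) ≫ σ ≫ eqToHom (by rw [h])
    else if h' : k = n then
      eqToHom (if_pos (Or.inr h')) ≫ σ ≫ E.d (n + 1) n ≫ eqToHom (by rw [h'])
    else 0
  comm' i j hij := by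
    beta_reduce
    by_cases h1 : i = n + 1
    · have h2 : n = j := by simp only [ComplexShape.down_Rel] at hij; omega
      subst h2; subst h1
      simp [disk, show ¬((n:ℤ) = n + 1) by omega, eqToHom_trans]
    · by_cases h2 : i = n
      · have h3 : n - 1 = j := by simp only [ComplexShape.down_Rel] at hij; omega
        have h2' : n = i := h2.symm
        subst h3; subst h2'
        simp [disk, show ¬((n:ℤ) = n + 1) by omega, show ¬((n:ℤ) - 1 = n + 1) by omega,
          show ¬((n:ℤ) - 1 = n) by omega, show ¬((n:ℤ) = n + 1 ∧ (n:ℤ) - 1 = n) by omega]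
        exact (zero_comp).symm
      · rw [dif_neg h1, dif_neg h2, zero_comp]
        rw [show (disk P n).d i j = 0 from dif_neg (by tauto)]
        simp

/-- Chain map into the disk determined by `τ : C.X n ⟶ P`. -/
noncomputable def toDisk {C : ChainComplex (ModuleCat.{u} R) ℤ} (n : ℤ) {P : ModuleCat.{u} R}
    (τ : C.X n ⟶ P) : C ⟶ disk P n where
  f k :=
    if h : k = n + 1 then
      eqToHom (by rw [h]) ≫ C.d (n + 1) n ≫ τ ≫ eqToHom (if_pos (Or.inl h)).symm
    else if h' : k = n then
      eqToHom (by rw [h']) ≫ τ ≫ eqToHom (if_pos (Or.inr h')).symm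
    else 0
  comm' i j hij := by
    beta_reduce
    by_cases h1 : i = n + 1
    · have h2 : n = j := by simp only [ComplexShape.down_Rel] at hij; omega
      subst h2; subst h1
      simp [disk, show ¬((n:ℤ) = n + 1) by omega, eqToHom_trans]
    · by_cases h2 : i = n + 2
      · have h3 : n + 1 = j := by simp only [ComplexShape.down_Rel] at hij; omega
        subst h3; subst h2
        simp [disk, show ¬((n:ℤ) + 2 = n + 1) by omega, show ¬((n:ℤ) + 2 = n) by omega,
          show ¬((n:ℤ) + 2 = n + 1 ∧ (n:ℤ) + 1 = n) by omega]
        exact zero_comp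
      · have hj1 : ¬ (j = n + 1) := by simp only [ComplexShape.down_Rel] at hij; omega
        have hj2 : ¬ (j = n) := by simp only [ComplexShape.down_Rel] at hij; omega
        rw [dif_neg hj1, dif_neg hj2]
        rw [show (disk P n).d i j = 0 from dif_neg (by tauto)]
        simp

/-- The map of disks induced by a module map. -/
noncomputable def diskMap {P Q : ModuleCat.{u} R} (e : P ⟶ Q) (n : ℤ) :
    disk P n ⟶ disk Q n where
  f k := if h : k = n + 1 ∨ k = n then eqToHom (if_pos h) ≫ e ≫ eqToHom (if_pos h).symm else 0
  comm' i j hij := by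
    beta_reduce
    by_cases h : i = n + 1 ∧ j = n
    · obtain ⟨h1, h2⟩ := h
      have h2' : n = j := h2.symm
      subst h2'; subst h1
      simp [disk, show ¬((n:ℤ) = n + 1) by omega, eqToHom_trans]
    · have hP : (disk P n).d i j = 0 := dif_neg h
      have hQ : (disk Q n).d i j = 0 := dif_neg h
      rw [hP, hQ, comp_zero, zero_comp]

lemma diskMap_epi {P Q : ModuleCat.{u} R} (e : P ⟶ Q) [Epi e] (n : ℤ) : Epi (diskMap e n) := by
  apply epi_of_epi_f
  intro k
  by_cases h : k = n + 1 ∨ k = n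
  · dsimp [diskMap]
    rw [dif_pos h]
    have hE : ∀ {X Y : ModuleCat.{u} R} (p : X = Y), Epi (eqToHom p) := fun p => by
      subst p; rw [eqToHom_refl]; infer_instance
    exact @epi_comp _ _ _ _ _ _ (hE _) _ (@epi_comp _ _ _ _ _ _ inferInstance _ (hE _))
  · exact ⟨fun u v _ => (disk_isZero Q n k h).eq_of_src u v⟩


lemma disk_projective (P : ModuleCat.{u} R) (hP : Projective P) (n : ℤ) :
    Projective (disk P n) where
  factors {E M} φ π hπ := by
    haveI := hπ
    obtain ⟨σ, hσ⟩ := hP.factors (eqToHom (if_pos (Or.inl rfl)).symm ≫ φ.f (n + 1)) (π.f (n + 1))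
    refine ⟨diskTo P n σ, ?_⟩
    apply HomologicalComplex.hom_ext
    intro k
    rw [HomologicalComplex.comp_f]
    by_cases h1 : k = n + 1
    · have h1' : n + 1 = k := h1.symm
      subst h1'
      dsimp [diskTo]
      rw [dif_pos rfl]
      simp [hσ]
      erw [eqToHom_trans_assoc, eqToHom_refl, Category.id_comp]
    · by_cases h2 : k = n
      · have h2' : n = k := h2.symm
        subst h2'
        dsimp [diskTo]
        rw [dif_neg (show ¬((n:ℤ) = n + 1) by omega), dif_pos rfl]
        simp only [eqToHom_refl, Category.comp_id, Category.id_comp, Category.assoc]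
        rw [← HomologicalComplex.Hom.comm π (n+1) n, reassoc_of% hσ]
        erw [Category.assoc, HomologicalComplex.Hom.comm φ (n+1) n]
        simp [disk, eqToHom_trans]
      · exact (disk_isZero P n k (not_or.mpr ⟨h1, h2⟩)).eq_of_src _ _


lemma projective_X {C : ChainComplex (ModuleCat.{u} R) ℤ} (hC : Projective C) (n : ℤ) :
    Projective (C.X n) where
  factors {E M} f e he := by
    haveI := he
    haveI := diskMap_epi e n
    obtain ⟨ψ, hψ⟩ := hC.factors (toDisk n f) (diskMap e n)
    refine ⟨ψ.f n ≫ eqToHom (if_pos (Or.inr rfl)), ?_⟩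
    have h0 : ψ.f n ≫ (diskMap e n).f n = (toDisk n f).f n := by
      rw [← HomologicalComplex.comp_f, hψ]
    dsimp [diskMap, toDisk] at h0
    rw [dif_pos (Or.inr rfl), dif_neg (show ¬((n:ℤ) = n + 1) by omega), dif_pos rfl] at h0
    simp only [eqToHom_refl, Category.id_comp, Category.assoc] at h0
    rw [← cancel_mono (eqToHom ((if_pos (Or.inr rfl)).symm :
      M = (disk M n).X n))]
    simp [Category.assoc] at h0 ⊢
    exact h0

end GPAux


theorem gorenstein_projective_complex_degreewise {R : Type u} [Ring R]
    (G : ChainComplex (ModuleCat.{u} R) ℤ) (hG : IsGorensteinProjective G) :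
    ∀ n : ℤ, IsGorensteinProjective (G.X n) := by
  obtain ⟨Q, hQproj, hQexact, ⟨ι, w, hmono, hexact⟩, hlift⟩ := hG
  intro n
  refine ⟨((HomologicalComplex.eval (ModuleCat.{u} R) (ComplexShape.down ℤ) n).mapHomologicalComplex
      (ComplexShape.down ℤ)).obj Q, ?_, ?_, ?_, ?_⟩
  · intro m
    exact GPAux.projective_X (hQproj m) n
  · intro m
    exact (hQexact m).map (HomologicalComplex.eval (ModuleCat.{u} R) (ComplexShape.down ℤ) n)
  · refine ⟨ι.f n, ?_, ?_, ?_⟩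
    · show ι.f n ≫ (Q.d 0 (-1)).f n = 0
      rw [← HomologicalComplex.comp_f, w]
      rfl
    · haveI := hmono
      show Mono (ι.f n)
      infer_instance
    · exact hexact.map (HomologicalComplex.eval (ModuleCat.{u} R) (ComplexShape.down ℤ) n)
  · intro P hP m f hf
    have hf' : (Q.d (m + 1) m).f n ≫ f = 0 := hf
    have hcond : Q.d (m + 1) m ≫ GPAux.toDisk n f = 0 := by
      apply HomologicalComplex.hom_ext
      intro k
      rw [HomologicalComplex.comp_f]
      by_cases h1 : k = n + 1
      · have h1' : n + 1 = k := h1.symm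
        subst h1'
        dsimp [GPAux.toDisk]
        rw [dif_pos rfl]
        simp only [eqToHom_refl, Category.id_comp, HomologicalComplex.Hom.comm_assoc,
          reassoc_of% hf']
        erw [reassoc_of% hf']
        simp
      · by_cases h2 : k = n
        · have h2' : n = k := h2.symm
          subst h2'
          dsimp [GPAux.toDisk]
          rw [dif_neg (show ¬((n:ℤ) = n + 1) by omega), dif_pos rfl]
          simp only [eqToHom_refl, Category.id_comp, reassoc_of% hf']
          erw [reassoc_of% hf']
          simp
        · exact (GPAux.disk_isZero P n k (not_or.mpr ⟨h1, h2⟩)).eq_of_tgt _ _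
    obtain ⟨ψ, hψ⟩ := hlift (GPAux.disk P n) (GPAux.disk_projective P hP n) m
      (GPAux.toDisk n f) hcond
    refine ⟨ψ.f n ≫ eqToHom (if_pos (Or.inr rfl)), ?_⟩
    show (Q.d m (m - 1)).f n ≫ ψ.f n ≫ eqToHom _ = f
    have h0 : (Q.d m (m - 1)).f n ≫ ψ.f n = (GPAux.toDisk n f).f n := by
      rw [← HomologicalComplex.comp_f, hψ]
    dsimp [GPAux.toDisk] at h0
    rw [dif_neg (show ¬((n:ℤ) = n + 1) by omega), dif_pos rfl] at h0
    simp only [eqToHom_refl, Category.id_comp] at h0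
    rw [← Category.assoc, h0]
    erw [Category.assoc, eqToHom_trans, eqToHom_refl, Category.comp_id]
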